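/- For every ζ ∈ (0, ζ₀) one has a₊(ζ) > 1/√ζ. -/

import Mathlib

/-- `a₊(ζ) = (1−ζ)/(2ζ) + √((1+ζ)(1−3ζ))/(2ζ)`. -/
noncomputable def aplus (ζ : ℝ) : ℝ :=
  (1 - ζ) / (2 * ζ) + Real.sqrt ((1 + ζ) * (1 - 3 * ζ)) / (2 * ζ)

/-- For every `ζ ∈ (0, ζ₀)` (with `ζ₀ = s₀²`, `s₀` the real root of `s³ + s² + s − 1 = 0`
in `(0,1)`), one has `a₊(ζ) > 1/√ζ`. -/
theorem stmt18 (s₀ : ℝ) (hs₀0 : 0 < s₀) (hs₀1 : s₀ < 1)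
    (hs₀ : s₀ ^ 3 + s₀ ^ 2 + s₀ - 1 = 0)
    (ζ : ℝ) (hζ0 : 0 < ζ) (hζ : ζ < s₀ ^ 2) :
    1 / Real.sqrt ζ < aplus ζ := by
  set s := Real.sqrt ζ with hsdef
  have hs0 : 0 < s := Real.sqrt_pos.mpr hζ0
  have hs2 : s ^ 2 = ζ := Real.sq_sqrt hζ0.le
  have hss₀ : s < s₀ := by
    have := Real.sqrt_lt_sqrt hζ0.le hζ
    rwa [Real.sqrt_sq hs₀0.le] at this
  have hcubic : s ^ 3 + s ^ 2 + s < 1 := by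
    nlinarith [mul_pos hs0 hs₀0, sq_nonneg (s + s₀), sq_nonneg s, sq_nonneg s₀]
  set D := (1 + ζ) * (1 - 3 * ζ) with hD
  have hkey : s ^ 2 + 2 * s - 1 < Real.sqrt D := by
    rcases lt_or_ge (s ^ 2 + 2 * s - 1) 0 with h | h
    · exact lt_of_lt_of_le h (Real.sqrt_nonneg D)
    · have hlt : (s ^ 2 + 2 * s - 1) ^ 2 < D := by
        rw [hD, ← hs2]
        nlinarith [mul_pos hs0 (by linarith : (0:ℝ) < 1 - s - s ^ 2 - s ^ 3)]
      calc s ^ 2 + 2 * s - 1 = Real.sqrt ((s ^ 2 + 2 * s - 1) ^ 2) :=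
            (Real.sqrt_sq h).symm
        _ < Real.sqrt D := Real.sqrt_lt_sqrt (sq_nonneg _) hlt
  have hsqrtD : s * (s ^ 2 + 2 * s - 1) < s * Real.sqrt D :=
    mul_lt_mul_of_pos_left hkey hs0
  have h2ζ : (0:ℝ) < 2 * ζ := by linarith
  rw [aplus, ← hD, ← add_div, div_lt_div_iff₀ hs0 h2ζ]
  nlinarith [hsqrtD, hs2]
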